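/- Let n ≥ 3, let x_0 ∈ ℝ^n with ∑_{i=1}^n x_{0,i} = 0, and let τ = 1 − 1/(n−1). For the repeated averaging chain under the measure μ_n, the sequence M_k = S(k)/τ^k, where S(k) = ∑_{i=1}^n x_{k,i}², is a nonnegative martingale, and for μ_n-almost every pair sequence ω the limit lim_{k→∞} S(k,ω)/τ^k exists and is finite. -/

import Mathlib

open MeasureTheory Finset Filter
open scoped ENNReal NNReal

/-- The set of unordered pairs of distinct indices in `Fin n`, encoded as
2-element subsets of `Fin n`. -/
abbrev Pairs (n : ℕ) : Type := {s : Finset (Fin n) // s.card = 2}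

instance (n : ℕ) : MeasurableSpace (Pairs n) := ⊤

/-- The uniform probability measure on the set of pairs. -/
noncomputable def uniformPair (n : ℕ) : Measure (Pairs n) :=
  (Fintype.card (Pairs n) : ℝ≥0∞)⁻¹ • Measure.count

/-- `μ` is the infinite product over `ℕ` of the uniform measure on pairs:
its finite-dimensional marginals are the finite uniform product measures.
(This characterizes the infinite product measure uniquely.) -/
def IsProductLaw (n : ℕ) (μ : Measure (ℕ → Pairs n)) : Prop :=
  ∀ K : ℕ, μ.map (fun ω (i : Fin K) => ω i) = Measure.pi fun _ : Fin K => uniformPair n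

/-- The pair-averaging operation: both coordinates in `s` (a 2-element set `{i,j}`)
are replaced by `(x i + x j)/2`; the other coordinates are unchanged. -/
noncomputable def avgStep {n : ℕ} (s : Finset (Fin n)) (x : Fin n → ℝ) : Fin n → ℝ :=
  fun l => if l ∈ s then (∑ m ∈ s, x m) / 2 else x l

/-- The repeated averaging chain started at `x0`, driven by the pair sequence `ω`. -/
noncomputable def chain {n : ℕ} (x0 : Fin n → ℝ) (ω : ℕ → Pairs n) : ℕ → Fin n → ℝ
  | 0 => x0
  | k + 1 => avgStep (ω k).1 (chain x0 ω k)

/-- `T(k) = ∑_i |x_{k,i} - 1/n|`. -/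
noncomputable def Tdist {n : ℕ} (x0 : Fin n → ℝ) (ω : ℕ → Pairs n) (k : ℕ) : ℝ :=
  ∑ i, |chain x0 ω k i - 1 / n|

/-- The initial vector `(1,0,…,0)`. -/
def e1 (n : ℕ) : Fin n → ℝ := fun i => if i.val = 0 then 1 else 0

/-- The standard normal cumulative distribution function. -/
noncomputable def stdGaussianCDF (x : ℝ) : ℝ :=
  ∫ t in Set.Iic x, (2 * Real.pi) ^ (-(1:ℝ)/2) * Real.exp (-t ^ 2 / 2)

/-- The filtration `F_k = σ(ω_0, …, ω_{k-1})` generated by the first `k` chosen pairs. -/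
noncomputable def pairFiltration (n : ℕ) :
    Filtration ℕ (inferInstance : MeasurableSpace (ℕ → Pairs n)) where
  seq K := MeasurableSpace.comap (fun (ω : ℕ → Pairs n) (i : Fin K) => ω i) inferInstance
  mono' := by
    intro K L hKL
    dsimp only
    rw [show (fun (ω : ℕ → Pairs n) (i : Fin K) => ω i)
        = (fun (g : Fin L → Pairs n) (i : Fin K) => g (Fin.castLE hKL i))
          ∘ (fun (ω : ℕ → Pairs n) (i : Fin L) => ω i) from rfl,
      ← MeasurableSpace.comap_comp]
    exact MeasurableSpace.comap_mono (measurable_iff_comap_le.mp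
      (measurable_pi_lambda _ fun i => measurable_pi_apply _))
  le' K := measurable_iff_comap_le.mp
    (measurable_pi_lambda _ fun i => measurable_pi_apply _)

namespace RepAvg
variable {n : ℕ}

lemma ite_split (s : Finset (Fin n)) (hs : s.card = 2) (c : ℝ) (f : Fin n → ℝ) :
    ∑ l, (if l ∈ s then c else f l) = 2 * c + ((∑ l, f l) - ∑ l ∈ s, f l) := by
  rw [← Finset.sum_sdiff (Finset.subset_univ s)]
  have h1 : ∑ l ∈ Finset.univ \ s, (if l ∈ s then c else f l) = ∑ l ∈ Finset.univ \ s, f l := by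
    refine Finset.sum_congr rfl fun l hl => ?_
    rw [Finset.mem_sdiff] at hl
    simp [hl.2]
  have h2 : ∑ l ∈ s, (if l ∈ s then c else f l) = 2 * c := by
    rw [Finset.sum_congr rfl (fun l hl => if_pos hl), Finset.sum_const, hs]
    push_cast
    ring
  rw [h1, h2, Finset.sum_sdiff_eq_sub (Finset.subset_univ s)]
  ring

lemma sum_avgStep (x : Fin n → ℝ) (s : Finset (Fin n)) (hs : s.card = 2) :
    ∑ i, avgStep s x i = ∑ i, x i := by
  unfold avgStep
  rw [ite_split s hs _ x]
  ring

lemma sq_sum_avgStep (x : Fin n → ℝ) (s : Finset (Fin n)) (hs : s.card = 2) :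
    ∑ i, (avgStep s x i) ^ 2
      = (∑ i, x i ^ 2) - (1/4) * ∑ a ∈ s, ∑ b ∈ s, (x a - x b) ^ 2 := by
  unfold avgStep
  have h : ∀ l, (if l ∈ s then (∑ m ∈ s, x m) / 2 else x l) ^ 2
      = (if l ∈ s then ((∑ m ∈ s, x m) / 2) ^ 2 else x l ^ 2) := by
    intro l; split <;> rfl
  simp only [h]
  rw [ite_split s hs _ (fun l => x l ^ 2)]
  have hexp : ∑ a ∈ s, ∑ b ∈ s, (x a - x b) ^ 2
      = 4 * (∑ a ∈ s, x a ^ 2) - 2 * (∑ a ∈ s, x a) ^ 2 := by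
    have : ∀ a b, (x a - x b) ^ 2 = x a ^ 2 - 2 * (x a * x b) + x b ^ 2 := by intros; ring
    simp only [this, Finset.sum_add_distrib, Finset.sum_sub_distrib, Finset.sum_const, hs]
    have h2 : ∑ a ∈ s, ∑ b ∈ s, 2 * (x a * x b) = 2 * (∑ a ∈ s, x a) ^ 2 := by
      simp only [← Finset.mul_sum, ← Finset.sum_mul]
      rw [sq, Finset.sum_mul_sum]
    rw [h2]
    simp only [nsmul_eq_mul, Nat.cast_ofNat, ← Finset.mul_sum]
    ring
  rw [hexp]
  ring

lemma count_pair {a b : Fin n} (hab : a ≠ b) :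
    ∀ s : Pairs n, a ∈ s.1 → b ∈ s.1 → s = ⟨{a, b}, by rw [Finset.card_insert_of_notMem (by simpa using hab), Finset.card_singleton]⟩ := by
  rintro ⟨s, hs⟩ ha hb
  have hsub : ({a, b} : Finset (Fin n)) ⊆ s := by
    intro x hx
    rcases Finset.mem_insert.1 hx with h | h
    · exact h ▸ ha
    · exact (Finset.mem_singleton.1 h) ▸ hb
  have hcard : ({a, b} : Finset (Fin n)).card = 2 := by
    rw [Finset.card_insert_of_notMem (by simpa using hab), Finset.card_singleton]
  have := Finset.eq_of_subset_of_card_le hsub (by rw [hs, hcard])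
  exact Subtype.ext this.symm

lemma sum_pairs_double (g : Fin n → Fin n → ℝ) (hdiag : ∀ a, g a a = 0) :
    ∑ s : Pairs n, ∑ a ∈ s.1, ∑ b ∈ s.1, g a b = ∑ a, ∑ b, g a b := by
  have hrw : ∀ s : Pairs n, ∑ a ∈ s.1, ∑ b ∈ s.1, g a b
      = ∑ a, ∑ b, (if a ∈ s.1 ∧ b ∈ s.1 then g a b else 0) := by
    intro s
    have h1 : ∀ a, (∑ b, if a ∈ s.1 ∧ b ∈ s.1 then g a b else 0)
        = if a ∈ s.1 then ∑ b ∈ s.1, g a b else 0 := by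
      intro a
      by_cases ha : a ∈ s.1
      · simp only [ha, true_and, if_true]
        rw [Finset.sum_ite_mem, Finset.univ_inter]
      · simp [ha]
    simp only [h1]
    rw [Finset.sum_ite_mem, Finset.univ_inter]
  rw [Finset.sum_congr rfl (fun s _ => hrw s), Finset.sum_comm]
  refine Finset.sum_congr rfl fun a _ => ?_
  rw [Finset.sum_comm]
  refine Finset.sum_congr rfl fun b _ => ?_
  by_cases hab : a = b
  · subst hab
    simp [hdiag a]
  · rw [Finset.sum_eq_single (⟨{a, b}, Finset.card_pair hab⟩ : Pairs n)]
    · simp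
    · intro s _ hne
      rw [if_neg]
      rintro ⟨ha, hb⟩
      exact hne (count_pair hab s ha hb)
    · intro h
      exact absurd (Finset.mem_univ _) h

lemma card_pairs_real (hn : 3 ≤ n) :
    (Fintype.card (Pairs n) : ℝ) = n * ((n : ℝ) - 1) / 2 := by
  have h1 : Fintype.card (Pairs n) = Nat.choose n 2 := by
    simpa using Fintype.card_finset_len (α := Fin n) 2
  have h2 : 2 * Nat.choose n 2 = n * (n - 1) := by
    rw [Nat.choose_two_right]
    refine Nat.mul_div_cancel' ?_
    rcases Nat.even_or_odd n with he | ho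
    · exact Dvd.dvd.mul_right he.two_dvd _
    · exact Dvd.dvd.mul_left (Nat.Odd.sub_odd ho odd_one).two_dvd _
  have h3 : ((2 * Nat.choose n 2 : ℕ) : ℝ) = ((n * (n - 1) : ℕ) : ℝ) := by rw [h2]
  have hn1 : (1 : ℕ) ≤ n := by omega
  push_cast [hn1] at h3
  rw [h1]
  linarith

lemma key_avg (hn : 3 ≤ n) (x : Fin n → ℝ) (hx : ∑ i, x i = 0) :
    ∑ s : Pairs n, ∑ i, (avgStep s.1 x i) ^ 2
      = (Fintype.card (Pairs n) : ℝ) * ((1 - 1 / ((n : ℝ) - 1)) * ∑ i, x i ^ 2) := by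
  have h1 : ∀ s : Pairs n, ∑ i, (avgStep s.1 x i) ^ 2
      = (∑ i, x i ^ 2) - (1/4) * ∑ a ∈ s.1, ∑ b ∈ s.1, (x a - x b) ^ 2 :=
    fun s => sq_sum_avgStep x s.1 s.2
  rw [Finset.sum_congr rfl (fun s _ => h1 s), Finset.sum_sub_distrib, Finset.sum_const,
    ← Finset.mul_sum, sum_pairs_double _ (fun a => by ring)]
  have hdd : ∑ a, ∑ b, (x a - x b) ^ 2 = 2 * n * ∑ i, x i ^ 2 := by
    have : ∀ a b, (x a - x b) ^ 2 = x a ^ 2 - 2 * (x a * x b) + x b ^ 2 := by intros; ring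
    simp only [this, Finset.sum_add_distrib, Finset.sum_sub_distrib, Finset.sum_const,
      Finset.card_univ, Fintype.card_fin, nsmul_eq_mul, ← Finset.mul_sum, ← Finset.sum_mul]
    rw [hx]
    push_cast
    ring
  rw [hdd]
  simp only [Finset.card_univ, nsmul_eq_mul]
  rw [card_pairs_real hn]
  have hne : (n : ℝ) - 1 ≠ 0 := by
    have : (3 : ℝ) ≤ (n : ℝ) := by exact_mod_cast hn
    linarith
  field_simp
  ring


open MeasureTheory

/-- Extension of a finite pair sequence by a default pair. -/
noncomputable def ext (p0 : Pairs n) (k : ℕ) (y : Fin k → Pairs n) : ℕ → Pairs n :=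
  fun i => if h : i < k then y ⟨i, h⟩ else p0

lemma chain_congr (x0 : Fin n → ℝ) {ω ω' : ℕ → Pairs n} (k : ℕ)
    (h : ∀ i < k, ω i = ω' i) : chain x0 ω k = chain x0 ω' k := by
  induction k with
  | zero => rfl
  | succ k ih =>
    show avgStep (ω k).1 (chain x0 ω k) = avgStep (ω' k).1 (chain x0 ω' k)
    rw [ih (fun i hi => h i (hi.trans (Nat.lt_succ_self k))), h k (Nat.lt_succ_self k)]

lemma chain_sum_zero (x0 : Fin n → ℝ) (hx0 : ∑ i, x0 i = 0) (ω : ℕ → Pairs n) (k : ℕ) :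
    ∑ i, chain x0 ω k i = 0 := by
  induction k with
  | zero => exact hx0
  | succ k ih =>
    show ∑ i, avgStep (ω k).1 (chain x0 ω k) i = 0
    rw [sum_avgStep _ _ (ω k).2, ih]

instance : MeasurableSingletonClass (Pairs n) :=
  ⟨fun _ => MeasurableSpace.measurableSet_top⟩

/-- chain at time k from the extension of the restriction. -/
lemma chain_restr (x0 : Fin n → ℝ) (p0 : Pairs n) (ω : ℕ → Pairs n) (k : ℕ) :
    chain x0 (ext p0 k (fun i : Fin k => ω i)) k = chain x0 ω k := by
  refine chain_congr x0 k fun i hi => ?_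
  simp only [ext, dif_pos hi]

lemma ext_snoc_lt (p0 : Pairs n) (k : ℕ) (z : Fin k → Pairs n) (p : Pairs n) (i : ℕ)
    (hi : i < k) :
    ext p0 (k+1) (Fin.snoc z p) i = ext p0 k z i := by
  simp only [ext, dif_pos hi, dif_pos (hi.trans (Nat.lt_succ_self k))]
  have : (⟨i, hi.trans (Nat.lt_succ_self k)⟩ : Fin (k+1)) = Fin.castSucc ⟨i, hi⟩ := rfl
  rw [this, Fin.snoc_castSucc]

lemma chain_ext_snoc (x0 : Fin n → ℝ) (p0 : Pairs n) (k : ℕ) (z : Fin k → Pairs n)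
    (p : Pairs n) :
    chain x0 (ext p0 (k+1) (Fin.snoc z p)) (k+1) = avgStep p.1 (chain x0 (ext p0 k z) k) := by
  show avgStep ((ext p0 (k+1) (Fin.snoc z p)) k).1 _ = _
  have h1 : ext p0 (k+1) (Fin.snoc z p) k = p := by
    simp only [ext, dif_pos (Nat.lt_succ_self k)]
    exact Fin.snoc_last _ _ ▸ rfl
  rw [h1, chain_congr x0 k (fun i hi => ext_snoc_lt p0 k z p i hi)]

end RepAvg

open RepAvg in

/-- **Corollary (martingale property and a.s. convergence).** For `n ≥ 3`,
`τ = 1 - 1/(n-1)` and `∑ x₀ᵢ = 0`, the sequence `M_k = S(k)/τ^k` is a nonnegative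
martingale with respect to the filtration `F_k = σ(ω_0,…,ω_{k-1})`, and for
`μₙ`-almost every pair sequence `ω` the limit `lim_k S(k,ω)/τ^k` exists and is finite. -/
theorem L2_martingale_and_as_limit (n : ℕ) (hn : 3 ≤ n)
    (μ : Measure (ℕ → Pairs n)) (hμ : IsProductLaw n μ)
    (x0 : Fin n → ℝ) (hx0 : ∑ i, x0 i = 0) :
    Martingale
      (fun (k : ℕ) (ω : ℕ → Pairs n) =>
        (∑ i, (chain x0 ω k i) ^ 2) / (1 - 1 / ((n : ℝ) - 1)) ^ k)
      (pairFiltration n) μ ∧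
    (∀ (k : ℕ) (ω : ℕ → Pairs n),
        0 ≤ (∑ i, (chain x0 ω k i) ^ 2) / (1 - 1 / ((n : ℝ) - 1)) ^ k) ∧
    ∀ᵐ ω ∂μ, ∃ L : ℝ,
      Tendsto (fun k : ℕ => (∑ i, (chain x0 ω k i) ^ 2) / (1 - 1 / ((n : ℝ) - 1)) ^ k)
        atTop (nhds L) := by
  classical
  -- basic positivity facts
  have hn3 : (3 : ℝ) ≤ (n : ℝ) := by exact_mod_cast hn
  set τ : ℝ := 1 - 1 / ((n : ℝ) - 1) with hτdef
  have hτpos : 0 < τ := by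
    have h2 : (2 : ℝ) ≤ (n : ℝ) - 1 := by linarith
    have : 1 / ((n : ℝ) - 1) ≤ 1 / 2 := by
      apply one_div_le_one_div_of_le <;> linarith
    simp only [hτdef]; linarith
  have hτne : τ ≠ 0 := ne_of_gt hτpos
  -- a default pair
  have h0n : (0 : ℕ) < n := by omega
  have h1n : (1 : ℕ) < n := by omega
  have hne01 : (⟨0, h0n⟩ : Fin n) ≠ ⟨1, h1n⟩ := by simp [Fin.ext_iff]
  set p0 : Pairs n := ⟨{⟨0, h0n⟩, ⟨1, h1n⟩}, Finset.card_pair hne01⟩ with hp0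
  -- the martingale process
  set F : ℕ → (ℕ → Pairs n) → ℝ := fun k ω =>
    (∑ i, (chain x0 ω k i) ^ 2) / (1 - 1 / ((n : ℝ) - 1)) ^ k with hF
  set G : (k : ℕ) → (Fin k → Pairs n) → ℝ := fun k y =>
    (∑ i, (chain x0 (ext p0 k y) k i) ^ 2) / (1 - 1 / ((n : ℝ) - 1)) ^ k with hG
  have hFG : ∀ k ω, F k ω = G k (fun i : Fin k => ω i) := by
    intro k ω
    simp only [hF, hG, chain_restr x0 p0 ω k]
  -- measurability of restriction maps
  have hrestr : ∀ K : ℕ, Measurable (fun (ω : ℕ → Pairs n) (i : Fin K) => ω i) :=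
    fun K => measurable_pi_lambda _ fun i => measurable_pi_apply _
  -- probability measures
  have hNpos : 0 < Fintype.card (Pairs n) := Fintype.card_pos_iff.2 ⟨p0⟩
  have hNne : (Fintype.card (Pairs n) : ℝ≥0∞) ≠ 0 :=
    Nat.cast_ne_zero.mpr hNpos.ne' 
  haveI hunif : IsProbabilityMeasure (uniformPair n) := by
    constructor
    rw [uniformPair, Measure.smul_apply, Measure.count_univ, smul_eq_mul]
    rw [ENat.card_eq_coe_fintype_card, ENat.toENNReal_coe]
    exact ENNReal.inv_mul_cancel hNne (ENNReal.natCast_ne_top _)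
  haveI hμprob : IsProbabilityMeasure μ := by
    constructor
    have h0 := hμ 0
    have : μ.map (fun ω (i : Fin 0) => ω i) Set.univ = 1 := by
      rw [h0]; exact measure_univ
    rwa [Measure.map_apply (hrestr 0) MeasurableSet.univ, Set.preimage_univ] at this
  -- singleton masses of the finite-dimensional laws
  have hsingle : ∀ (K : ℕ) (y : Fin K → Pairs n),
      (Measure.pi fun _ : Fin K => uniformPair n) {y}
        = ((Fintype.card (Pairs n) : ℝ≥0∞))⁻¹ ^ K := by
    intro K y
    have hy : ({y} : Set (Fin K → Pairs n)) = Set.pi Set.univ (fun i => {y i}) := by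
      ext z
      simp [Set.mem_pi, funext_iff]
    rw [hy, Measure.pi_pi]
    have hu : ∀ p : Pairs n, uniformPair n {p} = (Fintype.card (Pairs n) : ℝ≥0∞)⁻¹ := by
      intro p
      rw [uniformPair, Measure.smul_apply, Measure.count_singleton, smul_eq_mul, mul_one]
    simp [hu, Finset.prod_const]
  -- integrability
  have hmeasF : ∀ k, Measurable (F k) := by
    intro k
    have : F k = (G k) ∘ (fun ω (i : Fin k) => ω i) := funext fun ω => hFG k ω
    rw [this]
    exact (measurable_of_countable (G k)).comp (hrestr k)
  have hint : ∀ k, Integrable (F k) μ := by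
    intro k
    refine (integrable_const (∑ y : Fin k → Pairs n, |G k y|)).mono'
      (hmeasF k).aestronglyMeasurable (ae_of_all _ fun ω => ?_)
    rw [hFG k ω, Real.norm_eq_abs]
    exact Finset.single_le_sum (f := fun y => |G k y|) (fun y _ => abs_nonneg _)
      (Finset.mem_univ _)
  -- adaptedness
  have hadp : StronglyAdapted (pairFiltration n) F := by
    intro k
    have : F k = (G k) ∘ (fun ω (i : Fin k) => ω i) := funext fun ω => hFG k ω
    rw [this]
    exact ((measurable_of_countable (G k)).comp
      (measurable_iff_comap_le.mpr le_rfl)).stronglyMeasurable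
  -- the one-step conditional expectation identity
  have hstep : ∀ k, F k =ᵐ[μ] μ[F (k + 1) | pairFiltration n k] := by
    intro k
    refine ae_eq_condExp_of_forall_setIntegral_eq ((pairFiltration n).le k) (hint (k+1))
      (fun s _ _ => (hint k).integrableOn) ?_
      (StronglyMeasurable.aestronglyMeasurable (hadp k))
    rintro s ⟨t, ht, rfl⟩ -
    -- the projection dropping the last coordinate
    set proj : (Fin (k+1) → Pairs n) → (Fin k → Pairs n) :=
      fun y i => y (Fin.castSucc i) with hproj
    have hFk : ∀ ω : ℕ → Pairs n, F k ω = (G k ∘ proj) (fun i : Fin (k+1) => ω i) := by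
      intro ω
      rw [hFG k ω]
      rfl
    have hFk1 : ∀ ω : ℕ → Pairs n, F (k+1) ω = G (k+1) (fun i : Fin (k+1) => ω i) :=
      fun ω => hFG (k+1) ω
    have hsetEq : (fun (ω : ℕ → Pairs n) (i : Fin k) => ω i) ⁻¹' t
        = (fun (ω : ℕ → Pairs n) (i : Fin (k+1)) => ω i) ⁻¹' (proj ⁻¹' t) := by
      ext ω
      simp only [Set.mem_preimage]
      rfl
    have hB : MeasurableSet (proj ⁻¹' t) := (Set.toFinite _).measurableSet
    have hmap := hμ (k+1)
    have hI : ∀ g : (Fin (k+1) → Pairs n) → ℝ,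
        ∫ ω in (fun (ω : ℕ → Pairs n) (i : Fin (k+1)) => ω i) ⁻¹' (proj ⁻¹' t),
          g (fun i : Fin (k+1) => ω i) ∂μ
        = ∑ y : Fin (k+1) → Pairs n,
            (((Fintype.card (Pairs n) : ℝ≥0∞))⁻¹ ^ (k+1)).toReal
              • (proj ⁻¹' t).indicator g y := by
      intro g
      rw [← setIntegral_map hB (measurable_of_countable g).aestronglyMeasurable
        (hrestr (k+1)).aemeasurable, hmap,
        ← integral_indicator hB, integral_fintype Integrable.of_finite]
      refine Finset.sum_congr rfl fun y _ => ?_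
      rw [measureReal_def, hsingle (k+1) y]
    calc ∫ ω in (fun (ω : ℕ → Pairs n) (i : Fin k) => ω i) ⁻¹' t, F k ω ∂μ
        = ∫ ω in (fun (ω : ℕ → Pairs n) (i : Fin (k+1)) => ω i) ⁻¹' (proj ⁻¹' t),
            (G k ∘ proj) (fun i : Fin (k+1) => ω i) ∂μ := by
          rw [← hsetEq]
          exact integral_congr_ae (Filter.Eventually.of_forall fun ω => hFk ω)
      _ = ∑ y : Fin (k+1) → Pairs n,
            (((Fintype.card (Pairs n) : ℝ≥0∞))⁻¹ ^ (k+1)).toReal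
              • (proj ⁻¹' t).indicator (G k ∘ proj) y := hI _
      _ = ∑ y : Fin (k+1) → Pairs n,
            (((Fintype.card (Pairs n) : ℝ≥0∞))⁻¹ ^ (k+1)).toReal
              • (proj ⁻¹' t).indicator (G (k+1)) y := by
          set c : ℝ := (((Fintype.card (Pairs n) : ℝ≥0∞))⁻¹ ^ (k+1)).toReal with hc
          have hre : ∀ (g : (Fin (k+1) → Pairs n) → ℝ),
              ∑ y : Fin (k+1) → Pairs n, c • (proj ⁻¹' t).indicator g y
                = ∑ z : Fin k → Pairs n, ∑ p : Pairs n,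
                    c • (proj ⁻¹' t).indicator g (Fin.snoc z p) := by
            intro g
            rw [← Equiv.sum_comp (Fin.snocEquiv (fun _ => Pairs n))
              (fun y => c • (proj ⁻¹' t).indicator g y), Fintype.sum_prod_type,
              Finset.sum_comm]
            exact Finset.sum_congr rfl fun z _ => Finset.sum_congr rfl fun p _ => rfl
          rw [hre, hre]
          refine Finset.sum_congr rfl fun z _ => ?_
          have hpz : ∀ p : Pairs n, proj (Fin.snoc z p) = z := by
            intro p
            funext i
            simp only [hproj, Fin.snoc_castSucc]
          have hmem : ∀ p : Pairs n, (Fin.snoc z p ∈ proj ⁻¹' t) ↔ z ∈ t := by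
            intro p
            simp [Set.mem_preimage, hpz p]
          by_cases hz : z ∈ t
          · have hkey : ∑ p : Pairs n, G (k+1) (Fin.snoc z p)
                = (Fintype.card (Pairs n) : ℝ) * G k z := by
              have hGsnoc : ∀ p : Pairs n, G (k+1) (Fin.snoc z p)
                  = (∑ i, (avgStep p.1 (chain x0 (ext p0 k z) k) i) ^ 2)
                      / (1 - 1 / ((n : ℝ) - 1)) ^ (k+1) := by
                intro p
                simp only [hG, chain_ext_snoc x0 p0 k z p]
              simp only [hG, chain_ext_snoc x0 p0 k z]
              rw [← Finset.sum_div]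
              rw [key_avg hn (chain x0 (RepAvg.ext p0 k z) k) (chain_sum_zero x0 hx0 _ k)]
              rw [pow_succ]
              have hτk : (1 - 1 / ((n : ℝ) - 1)) ^ k ≠ 0 := pow_ne_zero k hτne
              have hτ' : (1 - 1 / ((n : ℝ) - 1)) ≠ 0 := hτne
              field_simp
            have hL : ∀ p : Pairs n,
                (proj ⁻¹' t).indicator (G k ∘ proj) (Fin.snoc z p) = G k z := by
              intro p
              rw [Set.indicator_of_mem ((hmem p).2 hz)]
              simp [hpz p]
            have hR : ∀ p : Pairs n,
                (proj ⁻¹' t).indicator (G (k+1)) (Fin.snoc z p) = G (k+1) (Fin.snoc z p) :=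
              fun p => Set.indicator_of_mem ((hmem p).2 hz) _
            simp only [hL, hR, smul_eq_mul, ← Finset.mul_sum, hkey, Finset.sum_const,
              Finset.card_univ, nsmul_eq_mul]
            try ring
          · have hL : ∀ p : Pairs n,
                (proj ⁻¹' t).indicator (G k ∘ proj) (Fin.snoc z p) = 0 := by
              intro p
              exact Set.indicator_of_notMem (fun h => hz ((hmem p).1 h)) _
            have hR : ∀ p : Pairs n,
                (proj ⁻¹' t).indicator (G (k+1)) (Fin.snoc z p) = 0 := by
              intro p
              exact Set.indicator_of_notMem (fun h => hz ((hmem p).1 h)) _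
            simp [hL, hR]
      _ = ∫ ω in (fun (ω : ℕ → Pairs n) (i : Fin (k+1)) => ω i) ⁻¹' (proj ⁻¹' t),
            G (k+1) (fun i : Fin (k+1) => ω i) ∂μ := (hI _).symm
      _ = ∫ ω in (fun (ω : ℕ → Pairs n) (i : Fin k) => ω i) ⁻¹' t, F (k+1) ω ∂μ := by
          rw [hsetEq]
          exact integral_congr_ae (Filter.Eventually.of_forall fun ω => (hFk1 ω).symm)
  have hmart : Martingale F (pairFiltration n) μ := martingale_nat hadp hint hstep
  have hnonneg : ∀ k ω, 0 ≤ F k ω := fun k ω =>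
    div_nonneg (Finset.sum_nonneg fun i _ => sq_nonneg _) (pow_nonneg hτpos.le k)
  refine ⟨hmart, hnonneg, ?_⟩
  have hF0 : ∀ ω : ℕ → Pairs n, F 0 ω = ∑ i, x0 i ^ 2 := by
    intro ω
    simp only [hF, pow_zero, div_one]
    rfl
  have hconst : ∀ k, ∫ ω, F k ω ∂μ = ∑ i, x0 i ^ 2 := by
    intro k
    have h := hmart.setIntegral_eq (Nat.zero_le k)
      (@MeasurableSet.univ _ (pairFiltration n 0))
    rw [Measure.restrict_univ] at h
    rw [← h, integral_congr_ae (Filter.Eventually.of_forall hF0), integral_const,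
      probReal_univ, one_smul]
  have hbdd : ∀ k, eLpNorm (F k) 1 μ ≤ ((∑ i, x0 i ^ 2).toNNReal : ℝ≥0∞) := by
    intro k
    rw [eLpNorm_one_eq_lintegral_enorm, ← ofReal_integral_norm_eq_lintegral_enorm (hint k)]
    have h1 : ∫ ω, ‖F k ω‖ ∂μ = ∑ i, x0 i ^ 2 := by
      rw [← hconst k]
      exact integral_congr_ae (Filter.Eventually.of_forall fun ω =>
        Real.norm_of_nonneg (hnonneg k ω))
    rw [h1]
    exact le_of_eq rfl
  have hconv := hmart.submartingale.exists_ae_tendsto_of_bdd hbdd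
  filter_upwards [hconv] with ω hc
  exact hc
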